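/- Let a(n) be defined by ∑_{n≥0} a(n) qⁿ = (−q;q)∞²/(q;q)∞, and let ω_k denote the generalized pentagonal numbers. Then a(n) is even if and only if n is not a generalized pentagonal number. -/

import Mathlib

open PowerSeries Finset

/-- The power series `∏_{k=0}^∞ g k`, defined coefficientwise via stabilized
finite partial products (valid when `g k ≡ 1` modulo degree `> k`). -/
noncomputable def iProd (g : ℕ → PowerSeries ℤ) : PowerSeries ℤ :=
  PowerSeries.mk fun n => PowerSeries.coeff n (∏ k ∈ Finset.range (n + 1), g k)

/-- `(q^j; q^j)_∞ = ∏_{k≥1} (1 - q^{jk})` as a formal power series. -/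
noncomputable def F (j : ℕ) : PowerSeries ℤ :=
  iProd fun k => 1 - (PowerSeries.X : PowerSeries ℤ) ^ (j * (k + 1))

/-- `(-q; q)_∞ = ∏_{k≥1} (1 + q^k)` as a formal power series. -/
noncomputable def Fneg : PowerSeries ℤ :=
  iProd fun k => 1 + (PowerSeries.X : PowerSeries ℤ) ^ (k + 1)

/-- Multiplicative inverse of a power series with constant coefficient `1`. -/
noncomputable def psInv (f : PowerSeries ℤ) : PowerSeries ℤ := PowerSeries.invOfUnit f 1
/-- `a n` is the coefficient of `q^n` in `(-q;q)_∞^2 / (q;q)_∞`. -/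
noncomputable def a (n : ℕ) : ℤ := PowerSeries.coeff n (Fneg ^ 2 * psInv (F 1))


-- step 1 : reduction mod 2
noncomputable abbrev phi : PowerSeries ℤ →+* PowerSeries (ZMod 2) :=
  PowerSeries.map (Int.castRingHom (ZMod 2))

lemma neg_one_eq {m : ℕ} : ((1 : PowerSeries (ZMod 2)) - X ^ m) = 1 + X ^ m := by
  have h : (-(X ^ m) : PowerSeries (ZMod 2)) = X ^ m := by
    ext k
    rw [map_neg]
    exact CharTwo.neg_eq _
  rw [sub_eq_add_neg, h]

lemma coeff_phi_iProd (g : ℕ → PowerSeries ℤ) (n : ℕ) :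
    PowerSeries.coeff n (phi (iProd g)) =
      PowerSeries.coeff n (∏ k ∈ Finset.range (n + 1), phi (g k)) := by
  rw [← map_prod, PowerSeries.coeff_map, PowerSeries.coeff_map, iProd, PowerSeries.coeff_mk]

lemma phi_F1_eq_phi_Fneg : phi (F 1) = phi Fneg := by
  ext n
  rw [F, Fneg, coeff_phi_iProd, coeff_phi_iProd]
  congr 1
  apply Finset.prod_congr rfl
  intro k _
  simp only [map_sub, map_add, map_one, map_pow, PowerSeries.map_X, one_mul]
  exact neg_one_eq

lemma constCoeff_F1 : PowerSeries.constantCoeff (F 1) = 1 := by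
  rw [← PowerSeries.coeff_zero_eq_constantCoeff]
  rw [F, iProd, PowerSeries.coeff_mk, Finset.prod_range_one]
  simp

lemma phi_a_eq (n : ℕ) : ((a n : ZMod 2)) = PowerSeries.coeff n (phi (F 1)) := by
  have hinv : F 1 * psInv (F 1) = 1 := by
    apply PowerSeries.mul_invOfUnit
    rw [constCoeff_F1]; rfl
  have h2 : phi (Fneg ^ 2 * psInv (F 1)) = phi (F 1) := by
    rw [map_mul, map_pow, ← phi_F1_eq_phi_Fneg, pow_two, mul_assoc, ← map_mul, hinv, map_one,
      mul_one]
  rw [← h2, a, PowerSeries.coeff_map]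
  rfl

-- Part 2: counting
def Pn (n : ℕ) : Finset (Finset ℕ) :=
  (Finset.Icc 1 n).powerset.filter (fun S => ∑ x ∈ S, x = n)

lemma mem_Pn {n : ℕ} {S : Finset ℕ} : S ∈ Pn n ↔ S ⊆ Finset.Icc 1 n ∧ ∑ x ∈ S, x = n := by
  simp [Pn]

lemma coeff_prod_count (n : ℕ) :
    PowerSeries.coeff n (∏ k ∈ Finset.range (n + 1), (1 + X ^ (k + 1))) =
      (((Finset.range (n+1)).powerset.filter (fun t => ∑ k ∈ t, (k+1) = n)).card : ZMod 2) := by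
  have h1 : ∀ k : ℕ, (1 + X ^ (k + 1) : PowerSeries (ZMod 2)) = X ^ (k + 1) + 1 := fun k =>
    add_comm _ _
  simp_rw [h1]
  rw [Finset.prod_add]
  simp_rw [Finset.prod_const_one, mul_one, Finset.prod_pow_eq_pow_sum]
  rw [map_sum]
  simp_rw [PowerSeries.coeff_X_pow]
  rw [Finset.sum_boole]
  congr 2
  apply Finset.filter_congr
  intro t _
  simp [eq_comm]

lemma card_subsets_eq (n : ℕ) :
    ((Finset.range (n+1)).powerset.filter (fun t => ∑ k ∈ t, (k+1) = n)).card = (Pn n).card := by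
  apply Finset.card_nbij (fun t => t.image (· + 1))
  · intro t ht
    simp only [Finset.mem_coe, Finset.mem_filter, Finset.mem_powerset] at ht
    obtain ⟨hsub, hsum⟩ := ht
    have hsumim : ∑ x ∈ t.image (· + 1), x = n := by
      rw [Finset.sum_image (by intro x _ y _ h; simp only at h; omega)]
      exact hsum
    rw [Finset.mem_coe, mem_Pn]
    refine ⟨?_, hsumim⟩
    intro x hx
    simp only [Finset.mem_image] at hx
    obtain ⟨k, hk, rfl⟩ := hx
    rw [Finset.mem_Icc]
    constructor
    · omega
    · rw [← hsumim]
      exact Finset.single_le_sum (fun i _ => Nat.zero_le i)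
        (Finset.mem_image.2 ⟨k, hk, rfl⟩)
  · intro t1 h1 t2 h2 h
    exact Finset.image_injective (fun x y h => by omega) h
  · intro T hT
    simp only [Finset.coe_filter, Finset.mem_powerset, Set.mem_image, Set.mem_setOf_eq]
    rw [Finset.mem_coe, mem_Pn] at hT
    obtain ⟨hsub, hsum⟩ := hT
    have hpos : ∀ x ∈ T, 1 ≤ x := fun x hx => (Finset.mem_Icc.1 (hsub hx)).1
    refine ⟨T.image (· - 1), ⟨?_, ?_⟩, ?_⟩
    · intro x hx
      simp only [Finset.mem_image] at hx
      obtain ⟨y, hy, rfl⟩ := hx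
      have := (Finset.mem_Icc.1 (hsub hy)).2
      simp only [Finset.mem_range]; omega
    · rw [Finset.sum_image (by intro x hx y hy h; simp only at h; have := hpos x hx; have := hpos y hy; omega)]
      rw [← hsum]
      apply Finset.sum_congr rfl
      intro x hx; have := hpos x hx; omega
    · ext x
      simp only [Finset.mem_image]
      constructor
      · rintro ⟨y, ⟨z, hz, rfl⟩, rfl⟩
        have := hpos z hz
        simpa [Nat.sub_add_cancel this] using hz
      · intro hx
        exact ⟨x - 1, ⟨x, hx, rfl⟩, by have := hpos x hx; omega⟩

lemma coeff_phiF1_card (n : ℕ) :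
    PowerSeries.coeff n (phi (F 1)) = ((Pn n).card : ZMod 2) := by
  rw [phi_F1_eq_phi_Fneg, Fneg, coeff_phi_iProd]
  have h : ∀ k : ℕ, phi (1 + (PowerSeries.X : PowerSeries ℤ) ^ (k + 1)) =
      1 + (X : PowerSeries (ZMod 2)) ^ (k + 1) := by
    intro k
    simp [map_add, map_one, map_pow, PowerSeries.map_X]
  simp_rw [h]
  rw [coeff_prod_count, card_subsets_eq]

-- helpers
lemma max'_eqc {S : Finset ℕ} (h : S.Nonempty) {v : ℕ} (hv : v ∈ S) (hb : ∀ x ∈ S, x ≤ v) :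
    S.max' h = v := le_antisymm (Finset.max'_le _ _ _ hb) (Finset.le_max' _ _ hv)

lemma min'_eqc {S : Finset ℕ} (h : S.Nonempty) {v : ℕ} (hv : v ∈ S) (hb : ∀ x ∈ S, v ≤ x) :
    S.min' h = v := le_antisymm (Finset.min'_le _ _ hv) (Finset.le_min' _ _ _ hb)

lemma rb_ex (S : Finset ℕ) (h : S.Nonempty) : ∃ u, Finset.Icc u (S.max' h) ⊆ S := by
  refine ⟨S.max' h, fun x hx => ?_⟩
  rw [Finset.mem_Icc] at hx
  have : x = S.max' h := le_antisymm hx.2 hx.1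
  rw [this]; exact S.max'_mem h

noncomputable def rb (S : Finset ℕ) (h : S.Nonempty) : ℕ := Nat.find (rb_ex S h)

lemma rb_subset {S : Finset ℕ} (h : S.Nonempty) : Finset.Icc (rb S h) (S.max' h) ⊆ S :=
  Nat.find_spec (rb_ex S h)

lemma rb_le {S : Finset ℕ} (h : S.Nonempty) : rb S h ≤ S.max' h := by
  apply Nat.find_le
  intro x hx
  rw [Finset.mem_Icc] at hx
  have : x = S.max' h := le_antisymm hx.2 hx.1
  rw [this]; exact S.max'_mem h

lemma rb_le_of {S : Finset ℕ} (h : S.Nonempty) {v : ℕ}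
    (hsub : Finset.Icc v (S.max' h) ⊆ S) : rb S h ≤ v := Nat.find_le hsub

lemma rb_mem {S : Finset ℕ} (h : S.Nonempty) : rb S h ∈ S :=
  rb_subset h (Finset.mem_Icc.2 ⟨le_rfl, rb_le h⟩)

lemma rb_pos {S : Finset ℕ} (h : S.Nonempty) (h1 : ∀ x ∈ S, 1 ≤ x) : 1 ≤ rb S h :=
  h1 _ (rb_mem h)

lemma rb_pred_not_mem {S : Finset ℕ} (h : S.Nonempty) (h1 : ∀ x ∈ S, 1 ≤ x) :
    rb S h - 1 ∉ S := by
  intro hmem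
  have hpos := rb_pos h h1
  have hmin := Nat.find_min (rb_ex S h) (show rb S h - 1 < rb S h by omega)
  apply hmin
  intro x hx
  rw [Finset.mem_Icc] at hx
  by_cases hc : x = rb S h - 1
  · rw [hc]; exact hmem
  · exact rb_subset h (Finset.mem_Icc.2 ⟨by omega, hx.2⟩)

lemma rb_eqc {S : Finset ℕ} (h : S.Nonempty) {v : ℕ} (h1v : 1 ≤ v)
    (hvm : v ≤ S.max' h + 1) (hsub : Finset.Icc v (S.max' h) ⊆ S) (hnot : v - 1 ∉ S) :
    rb S h = v := by
  refine le_antisymm (Nat.find_le hsub) ?_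
  by_contra h'
  push_neg at h'
  apply hnot
  exact rb_subset h (Finset.mem_Icc.2 ⟨by omega, by omega⟩)

def isFix (S : Finset ℕ) : Prop :=
  ∃ k : ℕ, S = Finset.Icc (k + 1) (2 * k) ∨ S = Finset.Icc (k + 1) (2 * k + 1)

lemma isFix_empty : isFix ∅ := ⟨0, Or.inl (by simp)⟩

lemma isFix_iff {S : Finset ℕ} (h : S.Nonempty) (h1 : ∀ x ∈ S, 1 ≤ x) :
    isFix S ↔ S = Finset.Icc (S.min' h) (S.max' h) ∧
      (2 * S.min' h = S.max' h + 1 ∨ 2 * S.min' h = S.max' h + 2) := by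
  constructor
  · rintro ⟨k, hk | hk⟩
    · have hne : k + 1 ≤ 2 * k := by
        by_contra hc
        rw [Finset.Icc_eq_empty (by omega)] at hk
        exact Finset.Nonempty.ne_empty (hk ▸ h) (by simp [hk]) |>.elim
      have hmin : S.min' h = k + 1 := min'_eqc h (by rw [hk]; exact Finset.mem_Icc.2 ⟨le_rfl, hne⟩)
        (by intro x hx; rw [hk, Finset.mem_Icc] at hx; omega)
      have hmax : S.max' h = 2 * k := max'_eqc h (by rw [hk]; exact Finset.mem_Icc.2 ⟨hne, le_rfl⟩)
        (by intro x hx; rw [hk, Finset.mem_Icc] at hx; omega)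
      rw [hmin, hmax]
      exact ⟨hk, Or.inr (by omega)⟩
    · have hne : k + 1 ≤ 2 * k + 1 := by omega
      have hmin : S.min' h = k + 1 := min'_eqc h (by rw [hk]; exact Finset.mem_Icc.2 ⟨le_rfl, hne⟩)
        (by intro x hx; rw [hk, Finset.mem_Icc] at hx; omega)
      have hmax : S.max' h = 2 * k + 1 := max'_eqc h
        (by rw [hk]; exact Finset.mem_Icc.2 ⟨hne, le_rfl⟩)
        (by intro x hx; rw [hk, Finset.mem_Icc] at hx; omega)
      rw [hmin, hmax]
      exact ⟨hk, Or.inl (by omega)⟩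
  · rintro ⟨hS, hd⟩
    have hpos : 1 ≤ S.min' h := h1 _ (S.min'_mem h)
    have hmem : ∀ x, x ∈ S ↔ (S.min' h ≤ x ∧ x ≤ S.max' h) := by
      intro x
      constructor
      · intro hx; exact ⟨Finset.min'_le _ _ hx, Finset.le_max' _ _ hx⟩
      · intro hx
        have : x ∈ Finset.Icc (S.min' h) (S.max' h) := Finset.mem_Icc.2 hx
        rw [← hS] at this; exact this
    refine ⟨S.min' h - 1, ?_⟩
    rcases hd with hd | hd
    · refine Or.inr ?_
      ext x
      simp only [hmem x, Finset.mem_Icc]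
      omega
    · refine Or.inl ?_
      ext x
      simp only [hmem x, Finset.mem_Icc]
      omega

lemma Icc_succ_insert (a b : ℕ) (h : a ≤ b + 1) :
    Finset.Icc a (b + 1) = insert (b + 1) (Finset.Icc a b) := by
  ext x
  simp only [Finset.mem_Icc, Finset.mem_insert]
  omega

lemma gauss (a b : ℕ) : 2 * (∑ x ∈ Finset.Icc a b, x) = (a + b) * (b + 1 - a) := by
  induction b with
  | zero =>
    by_cases ha : a = 0
    · subst ha; simp
    · rw [Finset.Icc_eq_empty (by omega)]
      simp
      omega
  | succ b ih =>
    by_cases hab : a ≤ b + 1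
    · rw [Icc_succ_insert a b hab, Finset.sum_insert (by simp [Finset.mem_Icc])]
      zify [hab, show a ≤ b + 2 by omega] at ih ⊢
      linear_combination ih
    · rw [Finset.Icc_eq_empty (by omega)]
      simp
      omega

lemma sum_Icc_shift (a b : ℕ) :
    ∑ x ∈ Finset.Icc (a + 1) (b + 1), x = (∑ x ∈ Finset.Icc a b, x) + (b + 1 - a) := by
  have himg : Finset.Icc (a + 1) (b + 1) = (Finset.Icc a b).image (· + 1) := by
    rw [Finset.image_add_right_Icc]
  rw [himg, Finset.sum_image (by intro x _ y _ h; simp only at h; omega), Finset.sum_add_distrib, Finset.sum_const,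
    Nat.card_Icc, smul_eq_mul, mul_one]

noncomputable def franklin (S : Finset ℕ) : Finset ℕ :=
  if h : S.Nonempty then
    if S.min' h + rb S h ≤ S.max' h + 1 then
      (S \ insert (S.min' h) (Finset.Icc (S.max' h + 1 - S.min' h) (S.max' h))) ∪
        Finset.Icc (S.max' h + 2 - S.min' h) (S.max' h + 1)
    else
      (S \ Finset.Icc (rb S h) (S.max' h)) ∪
        insert (S.max' h + 1 - rb S h) (Finset.Icc (rb S h - 1) (S.max' h - 1))
  else S

lemma caseA {n : ℕ} {S : Finset ℕ} (h : S.Nonempty) (hsub : S ⊆ Finset.Icc 1 n)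
    (hsum : ∑ x ∈ S, x = n) (hf : ¬ isFix S)
    (hc : S.min' h + rb S h ≤ S.max' h + 1) :
    franklin S ∈ Pn n ∧ ¬ isFix (franklin S) ∧ franklin (franklin S) = S ∧ franklin S ≠ S := by
  have h1 : ∀ x ∈ S, 1 ≤ x := fun x hx => (Finset.mem_Icc.1 (hsub hx)).1
  set m := S.max' h with hm
  set s := S.min' h with hs
  set u := rb S h with hu
  have hmS : m ∈ S := S.max'_mem h
  have hsS : s ∈ S := S.min'_mem h
  have hxle : ∀ x ∈ S, x ≤ m := fun x hx => Finset.le_max' S x hx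
  have hsx : ∀ x ∈ S, s ≤ x := fun x hx => Finset.min'_le S x hx
  have hs1 : 1 ≤ s := h1 _ hsS
  have hsm : s ≤ m := hsx m hmS
  have hus : s ≤ u := hsx u (rb_mem h)
  have hu1 : 1 ≤ u := rb_pos h h1
  have hum : u ≤ m := rb_le h
  have hrun : Finset.Icc u m ⊆ S := rb_subset h
  clear_value m s u
  set a := m + 1 - s with ha
  clear_value a
  have hau : u ≤ a := by omega
  have hIa : Finset.Icc a m ⊆ S := Finset.Subset.trans (Finset.Icc_subset_Icc hau le_rfl) hrun
  -- key inequality 2s ≤ m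
  have h2s : 2 * s ≤ m := by
    by_contra h'
    push_neg at h'
    have hus2 : u = s := by omega
    have hSeq : S = Finset.Icc s m := by
      apply Finset.Subset.antisymm
      · intro x hx
        rw [Finset.mem_Icc]
        exact ⟨hsx x hx, hxle x hx⟩
      · rw [show s = u from hus2.symm]
        exact hrun
    apply hf
    rw [isFix_iff h h1, ← hs, ← hm]
    exact ⟨hSeq, Or.inl (by omega)⟩
  set S' := (S \ insert s (Finset.Icc a m)) ∪ Finset.Icc (a + 1) (m + 1) with hS'
  clear_value S'
  have hfr : franklin S = S' := by
    rw [franklin, dif_pos h, ← hm, ← hs, ← hu, if_pos hc, ← ha,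
      show m + 2 - s = a + 1 by omega, hS']
  have memS' : ∀ x, x ∈ S' ↔ ((x ∈ S ∧ s < x ∧ x < a) ∨ (a + 1 ≤ x ∧ x ≤ m + 1)) := by
    intro x
    simp only [hS', Finset.mem_union, Finset.mem_sdiff, Finset.mem_insert, Finset.mem_Icc]
    constructor
    · rintro (⟨hxS, hne⟩ | h')
      · push_neg at hne
        have := hsx x hxS
        have := hxle x hxS
        left
        exact ⟨hxS, by omega, by omega⟩
      · right; exact h'
    · rintro (⟨hxS, h₁, h₂⟩ | h')
      · left; exact ⟨hxS, by omega⟩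
      · right; exact h'
  have hm1S' : m + 1 ∈ S' := (memS' _).2 (Or.inr ⟨by omega, le_rfl⟩)
  have h'ne : S'.Nonempty := ⟨m + 1, hm1S'⟩
  have h1' : ∀ x ∈ S', 1 ≤ x := by
    intro x hx
    rw [memS'] at hx
    rcases hx with ⟨hxS, _⟩ | h'
    · exact h1 x hxS
    · omega
  have hsum' : ∑ x ∈ S', x = n := by
    have hins : insert s (Finset.Icc a m) ⊆ S := by
      intro x hx
      rcases Finset.mem_insert.1 hx with rfl | hx'
      · exact hsS
      · exact hIa hx'
    have hdisj : Disjoint (S \ insert s (Finset.Icc a m)) (Finset.Icc (a + 1) (m + 1)) := by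
      rw [Finset.disjoint_left]
      intro x hx hx2
      rw [Finset.mem_sdiff, Finset.mem_insert] at hx
      rw [Finset.mem_Icc] at hx2
      obtain ⟨hxS, hxn⟩ := hx
      have := hxle x hxS
      push_neg at hxn
      obtain ⟨-, hxn2⟩ := hxn
      rw [Finset.mem_Icc] at hxn2
      omega
    rw [hS', Finset.sum_union hdisj]
    have hshift := sum_Icc_shift a m
    have hsplit := Finset.sum_sdiff (f := id) hins
    simp only [id] at hsplit
    have hsins : ∑ x ∈ insert s (Finset.Icc a m), x = s + ∑ x ∈ Finset.Icc a m, x :=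
      Finset.sum_insert (by rw [Finset.mem_Icc]; omega)
    omega
  have hsub' : S' ⊆ Finset.Icc 1 n := by
    intro x hx
    rw [Finset.mem_Icc]
    refine ⟨h1' x hx, ?_⟩
    rw [← hsum']
    exact Finset.single_le_sum (fun i _ => Nat.zero_le i) hx
  have hmem' : franklin S ∈ Pn n := by
    rw [hfr, mem_Pn]; exact ⟨hsub', hsum'⟩
  have hxle' : ∀ x ∈ S', x ≤ m + 1 := by
    intro x hx
    rw [memS'] at hx
    rcases hx with ⟨hxS, _⟩ | h'
    · have := hxle x hxS; omega
    · omega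
  have hmax' : S'.max' h'ne = m + 1 := max'_eqc h'ne hm1S' hxle'
  have hs'gt : ∀ x ∈ S', s < x := by
    intro x hx
    rw [memS'] at hx
    rcases hx with ⟨_, h₁, _⟩ | h' <;> omega
  have hs' : s < S'.min' h'ne := hs'gt _ (S'.min'_mem h'ne)
  have haS' : a ∉ S' := by
    rw [memS']
    rintro (⟨_, _, h₂⟩ | h') <;> omega
  have hrb' : rb S' h'ne = a + 1 := by
    apply rb_eqc h'ne (by omega) (by rw [hmax']; omega)
    · rw [hmax']
      intro x hx
      rw [Finset.mem_Icc] at hx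
      exact (memS' x).2 (Or.inr hx)
    · simpa using haS'
  have hcond' : ¬ (S'.min' h'ne + rb S' h'ne ≤ S'.max' h'ne + 1) := by
    rw [hrb', hmax']
    omega
  have hfix' : ¬ isFix (franklin S) := by
    rw [hfr, isFix_iff h'ne h1']
    rintro ⟨hEq, hd⟩
    have hle : S'.min' h'ne ≤ a + 1 :=
      Finset.min'_le _ _ ((memS' _).2 (Or.inr ⟨le_rfl, by omega⟩))
    have hgt : ¬ (S'.min' h'ne ≤ a) := by
      intro hh
      apply haS'
      have : a ∈ Finset.Icc (S'.min' h'ne) (S'.max' h'ne) :=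
        Finset.mem_Icc.2 ⟨hh, by rw [hmax']; omega⟩
      rw [← hEq] at this
      exact this
    rw [hmax'] at hd
    omega
  have hret : franklin (franklin S) = S := by
    rw [hfr, franklin, dif_pos h'ne, if_neg hcond', hrb', hmax']
    have e1 : m + 1 + 1 - (a + 1) = s := by omega
    have e2 : a + 1 - 1 = a := by omega
    have e3 : m + 1 - 1 = m := by omega
    rw [e1, e2, e3]
    ext x
    simp only [Finset.mem_union, Finset.mem_sdiff, Finset.mem_insert, Finset.mem_Icc, memS' x]
    constructor
    · rintro (⟨hmem, hni⟩ | hx)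
      · rcases hmem with ⟨hxS, _, _⟩ | hIcc
        · exact hxS
        · omega
      · rcases hx with rfl | ⟨h₁, h₂⟩
        · exact hsS
        · exact hIa (Finset.mem_Icc.2 ⟨h₁, h₂⟩)
    · intro hxS
      by_cases hxa : a ≤ x
      · right; right; exact ⟨hxa, hxle x hxS⟩
      · by_cases hxs : x = s
        · right; left; exact hxs
        · left
          constructor
          · left; exact ⟨hxS, by have := hsx x hxS; omega, by omega⟩
          · omega
  have hneq : franklin S ≠ S := by
    rw [hfr]
    intro hEq
    have : m + 1 ∈ S := hEq ▸ hm1S'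
    have := hxle _ this
    omega
  exact ⟨hmem', hfix', hret, hneq⟩

lemma caseB {n : ℕ} {S : Finset ℕ} (h : S.Nonempty) (hsub : S ⊆ Finset.Icc 1 n)
    (hsum : ∑ x ∈ S, x = n) (hf : ¬ isFix S)
    (hc : ¬ (S.min' h + rb S h ≤ S.max' h + 1)) :
    franklin S ∈ Pn n ∧ ¬ isFix (franklin S) ∧ franklin (franklin S) = S ∧ franklin S ≠ S := by
  have h1 : ∀ x ∈ S, 1 ≤ x := fun x hx => (Finset.mem_Icc.1 (hsub hx)).1
  set m := S.max' h with hm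
  set s := S.min' h with hs
  set u := rb S h with hu
  have hmS : m ∈ S := S.max'_mem h
  have hsS : s ∈ S := S.min'_mem h
  have hxle : ∀ x ∈ S, x ≤ m := fun x hx => Finset.le_max' S x hx
  have hsx : ∀ x ∈ S, s ≤ x := fun x hx => Finset.min'_le S x hx
  have hs1 : 1 ≤ s := h1 _ hsS
  have hsm : s ≤ m := hsx m hmS
  have hus : s ≤ u := hsx u (rb_mem h)
  have hu1 : 1 ≤ u := rb_pos h h1
  have hum : u ≤ m := rb_le h
  have hrun : Finset.Icc u m ⊆ S := rb_subset h
  have hbot : u - 1 ∉ S := rb_pred_not_mem h h1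
  clear_value m s u
  push_neg at hc
  have hu2 : 2 ≤ u := by omega
  have hkey : m + 3 ≤ 2 * u := by
    by_contra h'
    push_neg at h'
    have hsu : s = u := by omega
    have hSeq : S = Finset.Icc s m := by
      apply Finset.Subset.antisymm
      · intro x hx
        rw [Finset.mem_Icc]
        exact ⟨hsx x hx, hxle x hx⟩
      · rw [hsu]
        exact hrun
    apply hf
    rw [isFix_iff h h1, ← hs, ← hm]
    exact ⟨hSeq, Or.inr (by omega)⟩
  set t := m + 1 - u with ht
  clear_value t
  have ht1 : 1 ≤ t := by omega
  have hts : t + 1 ≤ s := by omega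
  have htu : t + 2 ≤ u := by omega
  set S' := (S \ Finset.Icc u m) ∪ insert t (Finset.Icc (u - 1) (m - 1)) with hS'
  clear_value S'
  have hfr : franklin S = S' := by
    rw [franklin, dif_pos h, ← hm, ← hs, ← hu, if_neg (by omega), ← ht, hS']
  have memS' : ∀ x, x ∈ S' ↔ ((x ∈ S ∧ s ≤ x ∧ x + 2 ≤ u) ∨ x = t ∨ (u - 1 ≤ x ∧ x ≤ m - 1)) := by
    intro x
    simp only [hS', Finset.mem_union, Finset.mem_sdiff, Finset.mem_insert, Finset.mem_Icc]
    constructor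
    · rintro (⟨hxS, hni⟩ | hx)
      · have h₁ := hxle x hxS
        have h₂ := hsx x hxS
        have hne : x ≠ u - 1 := fun e => hbot (e ▸ hxS)
        left
        exact ⟨hxS, h₂, by omega⟩
      · right; exact hx
    · rintro (⟨hxS, h₁, h₂⟩ | hx)
      · left; exact ⟨hxS, by omega⟩
      · right; exact hx
  have htS' : t ∈ S' := (memS' _).2 (Or.inr (Or.inl rfl))
  have hm1S' : m - 1 ∈ S' := (memS' _).2 (Or.inr (Or.inr ⟨by omega, le_rfl⟩))
  have h'ne : S'.Nonempty := ⟨t, htS'⟩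
  have h1' : ∀ x ∈ S', 1 ≤ x := by
    intro x hx
    rw [memS'] at hx
    rcases hx with ⟨hxS, _⟩ | rfl | hx'
    · exact h1 x hxS
    · omega
    · omega
  have hsum' : ∑ x ∈ S', x = n := by
    have hdisj : Disjoint (S \ Finset.Icc u m) (insert t (Finset.Icc (u - 1) (m - 1))) := by
      rw [Finset.disjoint_left]
      intro x hx hx2
      rw [Finset.mem_sdiff, Finset.mem_Icc] at hx
      rw [Finset.mem_insert, Finset.mem_Icc] at hx2
      obtain ⟨hxS, hxn⟩ := hx
      have h₁ := hxle x hxS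
      have h₂ := hsx x hxS
      have hne : x ≠ u - 1 := fun e => hbot (e ▸ hxS)
      omega
    rw [hS', Finset.sum_union hdisj]
    have hsplit := Finset.sum_sdiff (f := id) hrun
    simp only [id] at hsplit
    have hsins : ∑ x ∈ insert t (Finset.Icc (u - 1) (m - 1)), x
        = t + ∑ x ∈ Finset.Icc (u - 1) (m - 1), x :=
      Finset.sum_insert (by rw [Finset.mem_Icc]; omega)
    have hshift := sum_Icc_shift (u - 1) (m - 1)
    rw [show u - 1 + 1 = u by omega, show m - 1 + 1 = m by omega] at hshift
    omega
  have hsub' : S' ⊆ Finset.Icc 1 n := by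
    intro x hx
    rw [Finset.mem_Icc]
    refine ⟨h1' x hx, ?_⟩
    rw [← hsum']
    exact Finset.single_le_sum (fun i _ => Nat.zero_le i) hx
  have hmem' : franklin S ∈ Pn n := by
    rw [hfr, mem_Pn]; exact ⟨hsub', hsum'⟩
  have hxle' : ∀ x ∈ S', x ≤ m - 1 := by
    intro x hx
    rw [memS'] at hx
    rcases hx with ⟨hxS, _, _⟩ | rfl | hx' <;> omega
  have hmax' : S'.max' h'ne = m - 1 := max'_eqc h'ne hm1S' hxle'
  have hminge : ∀ x ∈ S', t ≤ x := by
    intro x hx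
    rw [memS'] at hx
    rcases hx with ⟨_, h₁, _⟩ | rfl | hx' <;> omega
  have hmin' : S'.min' h'ne = t := min'_eqc h'ne htS' hminge
  have hrb'le : rb S' h'ne ≤ u - 1 := by
    apply rb_le_of h'ne
    rw [hmax']
    intro x hx
    rw [Finset.mem_Icc] at hx
    exact (memS' x).2 (Or.inr (Or.inr hx))
  have hcond' : S'.min' h'ne + rb S' h'ne ≤ S'.max' h'ne + 1 := by
    rw [hmin', hmax']
    omega
  have hfix' : ¬ isFix (franklin S) := by
    rw [hfr, isFix_iff h'ne h1']
    rintro ⟨hEq, hd⟩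
    rw [hmin', hmax'] at hd
    omega
  have hret : franklin (franklin S) = S := by
    rw [hfr, franklin, dif_pos h'ne, if_pos hcond', hmin', hmax',
      show m - 1 + 1 - t = u - 1 by omega, show m - 1 + 2 - t = u by omega,
      show m - 1 + 1 = m by omega]
    ext x
    simp only [Finset.mem_union, Finset.mem_sdiff, Finset.mem_insert, Finset.mem_Icc, memS' x]
    constructor
    · rintro (⟨hmem, hni⟩ | hx)
      · push_neg at hni
        rcases hmem with ⟨hxS, _, _⟩ | rfl | hx'
        · exact hxS
        · omega
        · omega
      · exact hrun (Finset.mem_Icc.2 hx)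
    · intro hxS
      by_cases hxu : u ≤ x
      · right; exact ⟨hxu, hxle x hxS⟩
      · left
        have h₁ := hsx x hxS
        have hne : x ≠ u - 1 := fun e => hbot (e ▸ hxS)
        constructor
        · left; exact ⟨hxS, h₁, by omega⟩
        · push_neg
          exact ⟨by omega, by intro; omega⟩
  have hneq : franklin S ≠ S := by
    rw [hfr]
    intro hEq
    have : m ∈ S' := hEq.symm ▸ hmS
    have := hxle' m this
    omega
  exact ⟨hmem', hfix', hret, hneq⟩

theorem franklin_spec {n : ℕ} {S : Finset ℕ} (hS : S ∈ Pn n) (hf : ¬ isFix S) :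
    franklin S ∈ Pn n ∧ ¬ isFix (franklin S) ∧ franklin (franklin S) = S ∧ franklin S ≠ S := by
  rw [mem_Pn] at hS
  obtain ⟨hsub, hsum⟩ := hS
  have h : S.Nonempty := by
    rcases Finset.eq_empty_or_nonempty S with rfl | h
    · exact absurd isFix_empty hf
    · exact h
  by_cases hc : S.min' h + rb S h ≤ S.max' h + 1
  · exact caseA h hsub hsum hf hc
  · exact caseB h hsub hsum hf hc

open scoped Classical

lemma sum_fix1 (k : ℕ) : 2 * ∑ x ∈ Finset.Icc (k + 1) (2 * k), x = k * (3 * k + 1) := by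
  rw [gauss, show 2 * k + 1 - (k + 1) = k by omega]
  ring

lemma sum_fix2 (k : ℕ) : 2 * ∑ x ∈ Finset.Icc (k + 1) (2 * k + 1), x = (k + 1) * (3 * k + 2) := by
  rw [gauss, show 2 * k + 1 + 1 - (k + 1) = k + 1 by omega]
  ring

lemma pent_unique {j k : ℤ} (h : j * (3 * j + 1) = k * (3 * k + 1)) : j = k := by
  have h2 : (j - k) * (3 * (j + k) + 1) = 0 := by linear_combination h
  rcases mul_eq_zero.1 h2 with h3 | h3
  · omega
  · omega

noncomputable def pentSet (j : ℤ) : Finset ℕ :=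
  if 0 ≤ j then Finset.Icc (j.toNat + 1) (2 * j.toNat)
  else Finset.Icc ((-j).toNat) (2 * (-j).toNat - 1)

lemma types {n : ℕ} {S : Finset ℕ} (hS : S ∈ (Pn n).filter isFix) :
    ∃ j : ℤ, (2 * (n : ℤ)) = j * (3 * j + 1) ∧ S = pentSet j := by
  rw [Finset.mem_filter, mem_Pn] at hS
  obtain ⟨⟨hsub, hsum⟩, k, hk | hk⟩ := hS
  · refine ⟨(k : ℤ), ?_, ?_⟩
    · have h1 : 2 * n = k * (3 * k + 1) := by
        rw [← hsum, hk]
        exact sum_fix1 k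
      exact_mod_cast congrArg (Nat.cast : ℕ → ℤ) h1
    · rw [pentSet, if_pos (Int.natCast_nonneg k), Int.toNat_natCast]
      exact hk
  · refine ⟨-((k : ℤ) + 1), ?_, ?_⟩
    · have h1 : 2 * n = (k + 1) * (3 * k + 2) := by
        rw [← hsum, hk]
        exact sum_fix2 k
      have h2 : (2 * (n : ℤ)) = ((k : ℤ) + 1) * (3 * k + 2) := by exact_mod_cast h1
      rw [h2]; ring
    · rw [pentSet, if_neg (by omega)]
      rw [show -(-((k : ℤ) + 1)) = (k : ℤ) + 1 by ring]
      rw [show ((k : ℤ) + 1).toNat = k + 1 by omega]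
      rw [hk, show 2 * (k + 1) - 1 = 2 * k + 1 by omega]

lemma pentSet_mem {n : ℕ} {j : ℤ} (hj : (2 * (n : ℤ)) = j * (3 * j + 1)) :
    pentSet j ∈ (Pn n).filter isFix := by
  rcases le_or_gt 0 j with hj0 | hj0
  · set p := j.toNat with hp
    have hpj : (p : ℤ) = j := Int.toNat_of_nonneg hj0
    have hps : pentSet j = Finset.Icc (p + 1) (2 * p) := by rw [pentSet, if_pos hj0]
    have hsum : ∑ x ∈ Finset.Icc (p + 1) (2 * p), x = n := by
      have hInt : (2 * (n : ℤ)) = ((p : ℤ)) * (3 * (p : ℤ) + 1) := by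
        rw [hj, ← hpj]
      have h2 : 2 * n = p * (3 * p + 1) := by exact_mod_cast hInt
      have h3 := sum_fix1 p
      omega
    rw [Finset.mem_filter, mem_Pn, hps]
    refine ⟨⟨?_, hsum⟩, ⟨p, Or.inl rfl⟩⟩
    intro x hx
    have hx' := Finset.mem_Icc.1 hx
    rw [Finset.mem_Icc]
    refine ⟨by omega, ?_⟩
    rw [← hsum]
    exact Finset.single_le_sum (fun i _ => Nat.zero_le i) hx
  · have hp1 : 1 ≤ (-j).toNat := by omega
    set q := (-j).toNat - 1 with hq
    have hqj : (j : ℤ) = -((q : ℤ) + 1) := by omega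
    have hps : pentSet j = Finset.Icc (q + 1) (2 * q + 1) := by
      rw [pentSet, if_neg (by omega)]
      rw [show (-j).toNat = q + 1 by omega, show 2 * (q + 1) - 1 = 2 * q + 1 by omega]
    have hsum : ∑ x ∈ Finset.Icc (q + 1) (2 * q + 1), x = n := by
      have hInt : (2 * (n : ℤ)) = ((q : ℤ) + 1) * (3 * (q : ℤ) + 2) := by
        rw [hj, hqj]; ring
      have h2 : 2 * n = (q + 1) * (3 * q + 2) := by exact_mod_cast hInt
      have h3 := sum_fix2 q
      omega
    rw [Finset.mem_filter, mem_Pn, hps]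
    refine ⟨⟨?_, hsum⟩, ⟨q, Or.inr rfl⟩⟩
    intro x hx
    have hx' := Finset.mem_Icc.1 hx
    rw [Finset.mem_Icc]
    refine ⟨by omega, ?_⟩
    rw [← hsum]
    exact Finset.single_le_sum (fun i _ => Nat.zero_le i) hx

lemma card_fix (n : ℕ) :
    ((Pn n).filter isFix).card
      = if ∃ k : ℤ, (2 * (n : ℤ)) = k * (3 * k + 1) then 1 else 0 := by
  split_ifs with hp
  · obtain ⟨k, hk⟩ := hp
    rw [Finset.card_eq_one]
    refine ⟨pentSet k, ?_⟩
    rw [Finset.eq_singleton_iff_unique_mem]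
    refine ⟨pentSet_mem hk, ?_⟩
    intro S hS
    obtain ⟨j, hj, rfl⟩ := types hS
    rw [pent_unique (hj.symm.trans hk)]
  · rw [Finset.card_eq_zero, Finset.eq_empty_iff_forall_notMem]
    intro S hS
    obtain ⟨j, hj, -⟩ := types hS
    exact hp ⟨j, hj⟩

lemma card_Pn_mod2 (n : ℕ) :
    (((Pn n).card : ZMod 2))
      = if ∃ k : ℤ, (2 * (n : ℤ)) = k * (3 * k + 1) then 1 else 0 := by
  have h0 : (((Pn n).card : ZMod 2)) = ∑ _S ∈ Pn n, (1 : ZMod 2) := by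
    rw [Finset.sum_const, nsmul_eq_mul, mul_one]
  rw [h0]
  have h1 : ∀ S ∈ Pn n, (1 : ZMod 2)
      = (if isFix S then 1 else 0) + (if isFix S then 0 else 1) := by
    intro S _
    split_ifs <;> simp
  rw [Finset.sum_congr rfl h1, Finset.sum_add_distrib]
  have h2 : ∑ S ∈ Pn n, (if isFix S then (1 : ZMod 2) else 0)
      = (((Pn n).filter isFix).card : ZMod 2) := by
    rw [Finset.sum_boole]
  have h3 : ∑ S ∈ Pn n, (if isFix S then (0 : ZMod 2) else 1) = 0 := by
    apply Finset.sum_involution (fun S _ => if isFix S then S else franklin S)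
    · intro S hS
      by_cases hf : isFix S
      · simp [hf]
      · have hspec := franklin_spec hS hf
        rw [if_neg hf, if_neg hf, if_neg hspec.2.1]
        decide
    · intro S hS hne
      by_cases hf : isFix S
      · simp [hf] at hne
      · rw [if_neg hf]
        exact (franklin_spec hS hf).2.2.2
    · intro S hS
      by_cases hf : isFix S
      · simpa [hf]
      · rw [if_neg hf]
        exact (franklin_spec hS hf).1
    · intro S hS
      by_cases hf : isFix S
      · simp [hf]
      · have hspec := franklin_spec hS hf
        rw [if_neg hf, if_neg hspec.2.1]
        exact hspec.2.2.1
  rw [h2, h3, add_zero, card_fix]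
  split_ifs <;> simp

/-- `a n` is even iff `n` is not a generalized pentagonal number. -/
theorem a_even_iff_not_pentagonal (n : ℕ) :
    Even (a n) ↔ ¬ ∃ k : ℤ, (2 * n : ℤ) = k * (3 * k + 1) := by
  have h1 : ((a n : ZMod 2)) = (((Pn n).card : ZMod 2)) := by
    rw [phi_a_eq, coeff_phiF1_card]
  have h3 : Even (a n) ↔ ((a n : ZMod 2)) = 0 := by
    rw [even_iff_two_dvd]
    exact (ZMod.intCast_zmod_eq_zero_iff_dvd (a n) 2).symm
  rw [h3, h1, card_Pn_mod2 n]
  split_ifs with hp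
  · constructor
    · intro h01
      exact absurd h01 one_ne_zero
    · intro hnp
      exact absurd hp hnp
  · simp [hp]
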